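/- The maximal order of an abelian subgroup of the hyperoctahedral group of rank r (the group of signed permutations of {1,…,r}, i.e., the Weyl group of type B_r) is 2^r, and every abelian subgroup of this order is isomorphic to (Z/2)^s × (Z/4)^t with s + 2t = r. -/

import Mathlib

/-- Negation of the signed set `{±1, …, ±r}`, modelled as `Fin r × ZMod 2`. -/
def negSwap (r : ℕ) : Equiv.Perm (Fin r × ZMod 2) :=
  Equiv.prodCongr (Equiv.refl (Fin r)) (Equiv.addLeft (1 : ZMod 2))

/-- The hyperoctahedral group of rank `r` (the Weyl group of type `B_r`), as the
group of permutations of `{±1, …, ±r}` commuting with negation. -/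
def hyperoctahedral (r : ℕ) : Subgroup (Equiv.Perm (Fin r × ZMod 2)) :=
  Subgroup.centralizer {negSwap r}

open MulAction

section Aux

/-- Subgroups of permutation groups act faithfully. -/
instance subgroupPermFaithful {X : Type*} (H : Subgroup (Equiv.Perm X)) :
    FaithfulSMul H X :=
  ⟨fun h => Subtype.ext (Equiv.ext fun x => h x)⟩

variable {G X : Type*} [CommGroup G] [MulAction G X]

lemma two_dvd_orbit_card [Finite G] (ν : G) (hν2 : ν ^ 2 = 1)
    (hν : ∀ x : X, ν • x ≠ x) (x : X) : 2 ∣ Nat.card (orbit G x) := by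
  have h1 : Nat.card (orbit G x) = Nat.card (G ⧸ stabilizer G x) :=
    Nat.card_congr (orbitEquivQuotientStabilizer G x)
  have hpow : (QuotientGroup.mk' (stabilizer G x) ν) ^ 2 = 1 := by
    rw [← map_pow, hν2, map_one]
  have hne : (QuotientGroup.mk' (stabilizer G x) ν) ≠ 1 := by
    intro h
    exact hν x ((QuotientGroup.eq_one_iff ν).mp h)
  have hord : orderOf (QuotientGroup.mk' (stabilizer G x) ν) = 2 :=
    orderOf_eq_prime hpow hne
  rw [h1, ← hord]
  exact orderOf_dvd_natCard _

lemma card_le_prod_orbit_card [Finite G] [Finite X] [FaithfulSMul G X]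
    [Fintype (orbitRel.Quotient G X)] :
    Nat.card G ≤ ∏ q : orbitRel.Quotient G X, Nat.card (orbit G q.out) := by
  classical
  rw [← Nat.card_pi]
  apply Nat.card_le_card_of_injective
    (fun (g : G) => fun q : orbitRel.Quotient G X =>
      (⟨g • q.out, mem_orbit _ _⟩ : orbit G q.out))
  intro g g' h
  apply FaithfulSMul.eq_of_smul_eq_smul (α := X)
  intro x
  set q : orbitRel.Quotient G X := Quotient.mk (orbitRel G X) x with hq
  have hout : q.out ∈ orbit G x := Quotient.exact (q.out_eq)
  obtain ⟨k, hk⟩ := mem_orbit_iff.mp hout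
  have h' : g • q.out = g' • q.out := by
    have := congrFun h q
    exact Subtype.ext_iff.mp this
  rw [← hk, smul_smul, smul_smul, mul_comm g k, mul_comm g' k,
    ← smul_smul, ← smul_smul] at h'
  exact smul_left_cancel k h'

lemma natCard_sigma {ι : Type*} [Fintype ι] (f : ι → Type*) [∀ i, Finite (f i)] :
    Nat.card (Σ i, f i) = ∑ i, Nat.card (f i) := by
  letI := fun i => Fintype.ofFinite (f i)
  simp [Nat.card_eq_fintype_card]

lemma sum_orbit_card [Fintype X] [Fintype (orbitRel.Quotient G X)] :
    ∑ q : orbitRel.Quotient G X, Nat.card (orbit G q.out) = Fintype.card X := by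
  rw [← natCard_sigma, ← Nat.card_congr (selfEquivSigmaOrbits G X),
    Nat.card_eq_fintype_card]

lemma two_mul_le_two_pow {m : ℕ} (hm : 1 ≤ m) : 2 * m ≤ 2 ^ m := by
  induction m with
  | zero => omega
  | succ k ih =>
    rcases Nat.eq_or_lt_of_le hm with h | h
    · simp [← h]
    · have hk : 1 ≤ k := by omega
      have := ih hk
      have h2 : 2 ≤ 2 ^ k := by
        calc 2 = 2 * 1 := by ring
        _ ≤ 2 * k := by omega
        _ ≤ 2 ^ k := this
      calc 2 * (k + 1) = 2 * k + 2 := by ring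
      _ ≤ 2 ^ k + 2 ^ k := by omega
      _ = 2 ^ (k + 1) := by ring

lemma two_mul_eq_two_pow {m : ℕ} (hm : 1 ≤ m) (h : 2 * m = 2 ^ m) :
    m = 1 ∨ m = 2 := by
  by_contra hcon
  push_neg at hcon
  have h3 : 3 ≤ m := by omega
  clear hm hcon
  -- show 2 * m < 2 ^ m for m ≥ 3
  have : ∀ k, 2 * (k + 3) < 2 ^ (k + 3) := by
    intro k
    induction k with
    | zero => norm_num
    | succ n ih =>
      have h2 : 2 ≤ 2 ^ (n + 3) := by
        have : 2 ^ 1 ≤ 2 ^ (n + 3) := Nat.pow_le_pow_right (by norm_num) (by omega)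
        simpa using this
      calc 2 * (n + 1 + 3) = 2 * (n + 3) + 2 := by ring
      _ < 2 ^ (n + 3) + 2 ^ (n + 3) := by omega
      _ = 2 ^ (n + 1 + 3) := by ring
  have := this (m - 3)
  have hm3 : m - 3 + 3 = m := by omega
  rw [hm3] at this
  omega

/-- The key counting bound: a finite abelian group acting faithfully on a finite
set, containing a fixed-point-free involution, has order at most `2 ^ (|X| / 2)`. -/
lemma core_bound [Fintype X] [Finite G] [FaithfulSMul G X]
    (ν : G) (hν2 : ν ^ 2 = 1) (hν : ∀ x : X, ν • x ≠ x) :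
    Nat.card G ≤ 2 ^ (Fintype.card X / 2) := by
  classical
  haveI : Fintype (orbitRel.Quotient G X) := Fintype.ofFinite _
  have horb_pos : ∀ q : orbitRel.Quotient G X, 0 < Nat.card (orbit G q.out) := by
    intro q
    have : Nonempty (orbit G q.out) := ⟨⟨q.out, mem_orbit_self _⟩⟩
    exact Nat.card_pos
  have horb_even : ∀ q : orbitRel.Quotient G X, 2 ∣ Nat.card (orbit G q.out) :=
    fun q => two_dvd_orbit_card ν hν2 hν q.out
  calc Nat.card G ≤ ∏ q : orbitRel.Quotient G X, Nat.card (orbit G q.out) :=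
        card_le_prod_orbit_card
    _ ≤ ∏ q : orbitRel.Quotient G X, 2 ^ (Nat.card (orbit G q.out) / 2) := by
        apply Finset.prod_le_prod
        · intro q _; omega
        · intro q _
          obtain ⟨m, hm⟩ := horb_even q
          have hm1 : 1 ≤ m := by
            have := horb_pos q; omega
          rw [hm, Nat.mul_div_cancel_left m (by norm_num)]
          exact two_mul_le_two_pow hm1
    _ = 2 ^ (∑ q : orbitRel.Quotient G X, Nat.card (orbit G q.out) / 2) :=
        Finset.prod_pow_eq_pow_sum _ _ _
    _ = 2 ^ (Fintype.card X / 2) := by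
        congr 1
        have h2 : ∑ q : orbitRel.Quotient G X, Nat.card (orbit G q.out)
            = 2 * ∑ q : orbitRel.Quotient G X, Nat.card (orbit G q.out) / 2 := by
          rw [Finset.mul_sum]
          apply Finset.sum_congr rfl
          intro q _
          obtain ⟨m, hm⟩ := horb_even q
          omega
        have h3 := sum_orbit_card (G := G) (X := X)
        omega

/-- In a product of positive naturals which is termwise `≤`, equality of products
forces termwise equality. -/
lemma prod_eq_forces {ι : Type*} {s : Finset ι} {f g : ι → ℕ}
    (h0 : ∀ i ∈ s, 0 < f i) (hle : ∀ i ∈ s, f i ≤ g i)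
    (h : ∏ i ∈ s, f i = ∏ i ∈ s, g i) : ∀ i ∈ s, f i = g i := by
  classical
  induction s using Finset.induction_on with
  | empty => intro i hi; simp at hi
  | insert _ _ hx ih =>
    rename_i a s'
    rw [Finset.prod_insert hx, Finset.prod_insert hx] at h
    have hpf : 0 < ∏ i ∈ s', f i :=
      Finset.prod_pos (fun i hi => h0 i (Finset.mem_insert_of_mem hi))
    have hple : ∏ i ∈ s', f i ≤ ∏ i ∈ s', g i :=
      Finset.prod_le_prod (fun i hi => Nat.zero_le _)
        (fun i hi => hle i (Finset.mem_insert_of_mem hi))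
    have hfa : 0 < f a := h0 a (Finset.mem_insert_self _ _)
    have hfga : f a ≤ g a := hle a (Finset.mem_insert_self _ _)
    have heq1 : f a = g a := by
      by_contra hne
      have : f a < g a := by omega
      have : f a * ∏ i ∈ s', f i < g a * ∏ i ∈ s', g i :=
        Nat.mul_lt_mul_of_lt_of_le this hple (Nat.lt_of_lt_of_le hpf hple)
      omega
    have heq2 : ∏ i ∈ s', f i = ∏ i ∈ s', g i := by
      rw [heq1] at h
      have hga : 0 < g a := by omega
      exact Nat.eq_of_mul_eq_mul_left hga h
    intro i hi
    rcases Finset.mem_insert.mp hi with rfl | hi'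
    · exact heq1
    · exact ih (fun j hj => h0 j (Finset.mem_insert_of_mem hj))
        (fun j hj => hle j (Finset.mem_insert_of_mem hj)) heq2 i hi'

/-- Equality case of the counting bound: every element has order dividing 4. -/
lemma core_exponent [Fintype X] [Finite G] [FaithfulSMul G X]
    (ν : G) (hν2 : ν ^ 2 = 1) (hν : ∀ x : X, ν • x ≠ x)
    (hcard : Nat.card G = 2 ^ (Fintype.card X / 2)) :
    ∀ g : G, g ^ 4 = 1 := by
  classical
  haveI : Fintype (orbitRel.Quotient G X) := Fintype.ofFinite _
  have horb_pos : ∀ q : orbitRel.Quotient G X, 0 < Nat.card (orbit G q.out) := by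
    intro q
    have : Nonempty (orbit G q.out) := ⟨⟨q.out, mem_orbit_self _⟩⟩
    exact Nat.card_pos
  have horb_even : ∀ q : orbitRel.Quotient G X, 2 ∣ Nat.card (orbit G q.out) :=
    fun q => two_dvd_orbit_card ν hν2 hν q.out
  -- as in core_bound
  have hle1 : Nat.card G ≤ ∏ q : orbitRel.Quotient G X, Nat.card (orbit G q.out) :=
    card_le_prod_orbit_card
  have hle2 : ∀ q : orbitRel.Quotient G X,
      Nat.card (orbit G q.out) ≤ 2 ^ (Nat.card (orbit G q.out) / 2) := by
    intro q
    obtain ⟨m, hm⟩ := horb_even q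
    have hm1 : 1 ≤ m := by have := horb_pos q; omega
    rw [hm, Nat.mul_div_cancel_left m (by norm_num)]
    exact two_mul_le_two_pow hm1
  have hbig : (∏ q : orbitRel.Quotient G X, 2 ^ (Nat.card (orbit G q.out) / 2))
      = 2 ^ (Fintype.card X / 2) := by
    rw [Finset.prod_pow_eq_pow_sum]
    congr 1
    have h2 : ∑ q : orbitRel.Quotient G X, Nat.card (orbit G q.out)
        = 2 * ∑ q : orbitRel.Quotient G X, Nat.card (orbit G q.out) / 2 := by
      rw [Finset.mul_sum]
      apply Finset.sum_congr rfl
      intro q _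
      obtain ⟨m, hm⟩ := horb_even q
      omega
    have h3 := sum_orbit_card (G := G) (X := X)
    omega
  have hle3 : (∏ q : orbitRel.Quotient G X, Nat.card (orbit G q.out))
      ≤ 2 ^ (Fintype.card X / 2) := by
    rw [← hbig]
    exact Finset.prod_le_prod (fun q _ => Nat.zero_le _) (fun q _ => hle2 q)
  have hprodeq : (∏ q : orbitRel.Quotient G X, Nat.card (orbit G q.out))
      = ∏ q : orbitRel.Quotient G X, 2 ^ (Nat.card (orbit G q.out) / 2) := by
    rw [hbig]
    omega
  have hterm : ∀ q : orbitRel.Quotient G X,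
      Nat.card (orbit G q.out) = 2 ^ (Nat.card (orbit G q.out) / 2) := by
    intro q
    exact prod_eq_forces (fun i _ => horb_pos i) (fun i _ => hle2 i) hprodeq q
      (Finset.mem_univ q)
  -- hence every orbit has size 2 or 4
  have horb24 : ∀ x : X, Nat.card (orbit G x) ∣ 4 := by
    intro x
    set q : orbitRel.Quotient G X := Quotient.mk (orbitRel G X) x with hqdef
    have hout : q.out ∈ orbit G x := Quotient.exact (q.out_eq)
    have horbeq : orbit G q.out = orbit G x := orbit_eq_iff.mpr hout
    obtain ⟨m, hm⟩ := horb_even q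
    have hm1 : 1 ≤ m := by have := horb_pos q; omega
    have := hterm q
    rw [hm, Nat.mul_div_cancel_left m (by norm_num)] at this
    rcases two_mul_eq_two_pow hm1 this with h1 | h1
    · rw [← horbeq, hm, h1]; norm_num
    · rw [← horbeq, hm, h1]
  intro g
  apply FaithfulSMul.eq_of_smul_eq_smul (α := X)
  intro x
  have hdvd := horb24 x
  have hq : Nat.card (G ⧸ stabilizer G x) = Nat.card (orbit G x) :=
    (Nat.card_congr (orbitEquivQuotientStabilizer G x)).symm
  have hpow : (QuotientGroup.mk' (stabilizer G x) g) ^ Nat.card (orbit G x) = 1 := by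
    rw [← hq]
    exact pow_card_eq_one'
  have hmem : g ^ Nat.card (orbit G x) ∈ stabilizer G x := by
    rw [← QuotientGroup.eq_one_iff (N := stabilizer G x)]
    rw [← hpow]
    simp
  have hmem4 : g ^ 4 ∈ stabilizer G x := by
    obtain ⟨k, hk⟩ := hdvd
    rw [hk, pow_mul]
    exact pow_mem hmem k
  rw [one_smul]
  exact hmem4

end Aux

section Witness

variable (r : ℕ)

/-- The sign-flip permutation associated to `f : Fin r → ZMod 2`. -/
def flipPerm (f : Fin r → ZMod 2) : Equiv.Perm (Fin r × ZMod 2) where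
  toFun p := (p.1, p.2 + f p.1)
  invFun p := (p.1, p.2 + f p.1)
  left_inv p := by
    ext
    · rfl
    · simp [add_assoc, CharTwo.add_self_eq_zero]
  right_inv p := by
    ext
    · rfl
    · simp [add_assoc, CharTwo.add_self_eq_zero]

lemma negSwap_apply (p : Fin r × ZMod 2) : negSwap r p = (p.1, 1 + p.2) := rfl

lemma flipPerm_mem (f : Fin r → ZMod 2) : flipPerm r f ∈ hyperoctahedral r := by
  rw [hyperoctahedral, Subgroup.mem_centralizer_iff]
  intro h hh
  rw [Set.mem_singleton_iff] at hh
  subst hh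
  ext p
  · rfl
  · show (1 : ZMod 2) + (p.2 + f p.1) = (1 + p.2) + f p.1
    ring

/-- The group of sign flips, as a homomorphism into the hyperoctahedral group. -/
def flipHom : Multiplicative (Fin r → ZMod 2) →* hyperoctahedral r where
  toFun f := ⟨flipPerm r f.toAdd, flipPerm_mem r _⟩
  map_one' := by
    apply Subtype.ext
    ext p
    · rfl
    · show p.2 + (0 : ZMod 2) = p.2
      simp
  map_mul' f g := by
    apply Subtype.ext
    ext p
    · rfl
    · show p.2 + (f.toAdd + g.toAdd) p.1 = (p.2 + g.toAdd p.1) + f.toAdd p.1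
      show p.2 + (f.toAdd p.1 + g.toAdd p.1) = (p.2 + g.toAdd p.1) + f.toAdd p.1
      ring

lemma flipHom_injective : Function.Injective (flipHom r) := by
  rw [injective_iff_map_eq_one]
  intro f hf
  have : flipPerm r f.toAdd = 1 := Subtype.ext_iff.mp hf
  funext i
  have h2 := Equiv.ext_iff.mp this (i, 0)
  have : ((i, (0 : ZMod 2) + f.toAdd i) : Fin r × ZMod 2) = (i, 0) := h2
  exact (by simpa using congrArg Prod.snd this : Multiplicative.toAdd f i = 0)

end Witness


section Classify

/-- `Equiv.piCongrLeft'` as a `MulEquiv`. -/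
def mulPiCongrLeft' {α β : Type*} (P : α → Type*) [∀ a, Mul (P a)] (e : α ≃ β) :
    (∀ a, P a) ≃* ∀ b, P (e.symm b) :=
  { Equiv.piCongrLeft' P e with map_mul' := fun _ _ => rfl }

/-- Splitting a dependent product over a sum type, as a `MulEquiv`. -/
def mulPiSum {α β : Type*} (P : α ⊕ β → Type*) [∀ j, Mul (P j)] :
    (∀ j, P j) ≃* (∀ a, P (Sum.inl a)) × (∀ b, P (Sum.inr b)) where
  toFun f := (fun a => f (Sum.inl a), fun b => f (Sum.inr b))
  invFun p j := Sum.rec (fun a => p.1 a) (fun b => p.2 b) j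
  left_inv f := by funext j; cases j <;> rfl
  right_inv p := rfl
  map_mul' f g := rfl

/-- Transport along an equality of moduli. -/
def zmodMulCast {a b : ℕ} (h : a = b) :
    Multiplicative (ZMod a) ≃* Multiplicative (ZMod b) := by
  subst h; exact MulEquiv.refl _

lemma classify {G : Type*} [Group G] (hc : ∀ a b : G, a * b = b * a) {r : ℕ}
    (hcard : Nat.card G = 2 ^ r) (hexp : ∀ g : G, g ^ 4 = 1) :
    ∃ s t : ℕ, s + 2 * t = r ∧
      Nonempty (G ≃* ((Fin s → Multiplicative (ZMod 2)) ×
        (Fin t → Multiplicative (ZMod 4)))) := by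
  classical
  haveI : Finite G := Nat.finite_of_card_ne_zero (by rw [hcard]; positivity)
  letI : CommGroup G := { (inferInstance : Group G) with mul_comm := hc }
  obtain ⟨ι, hι, n, h1, ⟨e⟩⟩ := CommGroup.equiv_prod_multiplicative_zmod_of_finite G
  haveI := hι
  have hNeZero : ∀ i, NeZero (n i) := fun i => ⟨by have := h1 i; omega⟩
  have hn4 : ∀ i, n i ∣ 4 := by
    intro i
    have hx : ∀ y : (∀ j, Multiplicative (ZMod (n j))), y ^ 4 = 1 := by
      intro y
      calc y ^ 4 = e (e.symm y) ^ 4 := by rw [MulEquiv.apply_symm_apply]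
        _ = e ((e.symm y) ^ 4) := (map_pow e _ 4).symm
        _ = e 1 := by rw [hexp (e.symm y)]
        _ = 1 := map_one e
    have hcomp := congrFun (hx (Pi.mulSingle i (Multiplicative.ofAdd (1 : ZMod (n i))))) i
    rw [Pi.pow_apply, Pi.mulSingle_eq_same, Pi.one_apply] at hcomp
    have h6 : (4 : ZMod (n i)) = 0 := by
      have h2 : Multiplicative.toAdd ((Multiplicative.ofAdd (1 : ZMod (n i))) ^ 4) = 0 := by
        rw [hcomp]; rfl
      rw [toAdd_pow] at h2
      simpa using h2
    haveI := hNeZero i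
    exact (ZMod.natCast_eq_zero_iff 4 (n i)).mp (by exact_mod_cast h6)
  have hn : ∀ i, n i = 2 ∨ n i = 4 := by
    intro i
    have h4 := hn4 i
    have hgt := h1 i
    have hle := Nat.le_of_dvd (by norm_num) h4
    interval_cases h : (n i)
    · left; rfl
    · exfalso; norm_num at h4
    · right; rfl
  -- product of the moduli
  have hprod : ∏ i, n i = 2 ^ r := by
    have h0 : Nat.card G = ∏ i, n i := by
      rw [Nat.card_congr e.toEquiv, Nat.card_pi]
      apply Finset.prod_congr rfl
      intro i _
      haveI := hNeZero i
      rw [Nat.card_congr (Multiplicative.toAdd (α := ZMod (n i))), Nat.card_zmod]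
    rw [← h0, hcard]
  refine ⟨Fintype.card {i // n i = 2}, Fintype.card {i // ¬ n i = 2}, ?_, ?_⟩
  · -- counting
    apply Nat.pow_right_injective (le_refl 2)
    show (2:ℕ) ^ (Fintype.card {i // n i = 2} + 2 * Fintype.card {i // ¬ n i = 2}) = 2 ^ r
    rw [← hprod, pow_add, pow_mul]
    rw [← Finset.prod_filter_mul_prod_filter_not Finset.univ (fun i => n i = 2) n]
    congr 1
    · rw [Finset.prod_congr rfl (fun i hi => (Finset.mem_filter.mp hi).2),
        Finset.prod_const, Fintype.card_subtype]
    · rw [Finset.prod_congr (g := fun _ => (2:ℕ)^2)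
        rfl (fun i hi => by
          have := (Finset.mem_filter.mp hi).2
          rcases hn i with h | h
          · exact absurd h this
          · rw [h]; norm_num),
        Finset.prod_const, Fintype.card_subtype]
  · -- the isomorphism
    set s := Fintype.card {i // n i = 2} with hs
    set t := Fintype.card {i // ¬ n i = 2} with ht
    let e2 : {i // n i = 2} ≃ Fin s := Fintype.equivFin _
    let e4 : {i // ¬ n i = 2} ≃ Fin t := Fintype.equivFin _
    let eι : ι ≃ (Fin s ⊕ Fin t) :=
      (Equiv.sumCompl (fun i => n i = 2)).symm.trans (Equiv.sumCongr e2 e4)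
    have h2l : ∀ a : Fin s, n (eι.symm (Sum.inl a)) = 2 := fun a => (e2.symm a).2
    have h2r : ∀ b : Fin t, n (eι.symm (Sum.inr b)) = 4 := by
      intro b
      rcases hn (eι.symm (Sum.inr b)) with h | h
      · exact absurd h (e4.symm b).2
      · exact h
    let E1 := mulPiCongrLeft' (fun i => Multiplicative (ZMod (n i))) eι
    let E3 := mulPiSum (fun j => Multiplicative (ZMod (n (eι.symm j))))
    let EA : (∀ a : Fin s, Multiplicative (ZMod (n (eι.symm (Sum.inl a))))) ≃*
        (Fin s → Multiplicative (ZMod 2)) :=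
      MulEquiv.piCongrRight (fun a => zmodMulCast (h2l a))
    let EB : (∀ b : Fin t, Multiplicative (ZMod (n (eι.symm (Sum.inr b))))) ≃*
        (Fin t → Multiplicative (ZMod 4)) :=
      MulEquiv.piCongrRight (fun b => zmodMulCast (h2r b))
    exact ⟨((e.trans E1).trans E3).trans (MulEquiv.prodCongr EA EB)⟩


end Classify

section CommClosure

lemma comm_of_closure {H : Type*} [Group H] {S : Set H}
    (h : ∀ a ∈ S, ∀ b ∈ S, a * b = b * a) :
    ∀ a ∈ Subgroup.closure S, ∀ b ∈ Subgroup.closure S, a * b = b * a := by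
  have h1 : Subgroup.closure S ≤ Subgroup.centralizer S :=
    (Subgroup.closure_le _).mpr fun a ha => Subgroup.mem_centralizer_iff.mpr
      (fun b hb => h b hb a ha)
  have h2 : Subgroup.closure S ≤
      Subgroup.centralizer (Subgroup.closure S : Set H) := by
    apply (Subgroup.closure_le _).mpr
    intro a ha
    apply Subgroup.mem_centralizer_iff.mpr
    intro b hb
    exact (Subgroup.mem_centralizer_iff.mp (h1 hb) a ha).symm
  intro a ha b hb
  exact Subgroup.mem_centralizer_iff.mp (h2 hb) a ha

end CommClosure

theorem maximal_abelian_hyperoctahedral (r : ℕ) :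
    IsGreatest {m : ℕ | ∃ M : Subgroup (hyperoctahedral r),
        (∀ a b : M, a * b = b * a) ∧ Nat.card M = m} (2 ^ r) ∧
    ∀ M : Subgroup (hyperoctahedral r), (∀ a b : M, a * b = b * a) →
      Nat.card M = 2 ^ r →
      ∃ s t : ℕ, s + 2 * t = r ∧
        Nonempty (M ≃* ((Fin s → Multiplicative (ZMod 2)) ×
          (Fin t → Multiplicative (ZMod 4)))) := by
  classical
  -- the witness subgroup of sign flips
  have hwitcomm : ∀ a b : (flipHom r).range, a * b = b * a := by
    rintro ⟨a, f, rfl⟩ ⟨b, g, rfl⟩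
    apply Subtype.ext
    show flipHom r f * flipHom r g = flipHom r g * flipHom r f
    rw [← map_mul, ← map_mul, mul_comm]
  have hwitcard : Nat.card (flipHom r).range = 2 ^ r := by
    rw [Nat.card_congr (MonoidHom.ofInjective (flipHom_injective r)).toEquiv.symm]
    rw [Nat.card_congr (Multiplicative.toAdd (α := Fin r → ZMod 2)), Nat.card_pi]
    simp [Nat.card_zmod]
  -- the key bound and exponent facts
  have key : ∀ M : Subgroup (hyperoctahedral r), (∀ a b : M, a * b = b * a) →
      Nat.card M ≤ 2 ^ r ∧ (Nat.card M = 2 ^ r → ∀ m : M, m ^ 4 = 1) := by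
    intro M hM
    set ι := (hyperoctahedral r).subtype with hι
    set N : Subgroup (Equiv.Perm (Fin r × ZMod 2)) :=
      (M.map ι) ⊔ Subgroup.zpowers (negSwap r) with hN
    -- commutativity of N
    have hpair : ∀ a ∈ ((M.map ι : Subgroup (Equiv.Perm (Fin r × ZMod 2))) : Set (Equiv.Perm (Fin r × ZMod 2))) ∪ ↑(Subgroup.zpowers (negSwap r)),
        ∀ b ∈ ((M.map ι : Subgroup (Equiv.Perm (Fin r × ZMod 2))) : Set (Equiv.Perm (Fin r × ZMod 2))) ∪ ↑(Subgroup.zpowers (negSwap r)), a * b = b * a := by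
      have hcomm_map : ∀ x ∈ M.map ι, Commute (negSwap r) x := by
        rintro x ⟨x', hx', rfl⟩
        have h := Subgroup.mem_centralizer_singleton_iff.mp
          (show (x' : Equiv.Perm (Fin r × ZMod 2)) ∈
            Subgroup.centralizer {negSwap r} from x'.2)
        exact h.symm
      have hmm : ∀ x ∈ M.map ι, ∀ y ∈ M.map ι, x * y = y * x := by
        rintro x ⟨x', hx', rfl⟩ y ⟨y', hy', rfl⟩
        have h2 : x' * y' = y' * x' := by
          have h := hM ⟨x', hx'⟩ ⟨y', hy'⟩
          have := congrArg Subtype.val h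
          simpa using this
        rw [← map_mul, ← map_mul, h2]
      rintro a (ha | ha) b (hb | hb)
      · exact hmm a ha b hb
      · obtain ⟨k, rfl⟩ := hb
        exact ((hcomm_map a ha).zpow_left k).symm.eq
      · obtain ⟨k, rfl⟩ := ha
        exact ((hcomm_map b hb).zpow_left k).eq
      · obtain ⟨k, rfl⟩ := ha
        obtain ⟨l, rfl⟩ := hb
        exact (Commute.zpow_zpow_self (negSwap r) k l).eq
    have hcommN : ∀ a b : N, a * b = b * a := by
      have hcl := comm_of_closure hpair
      have hmem : ∀ c : N, (c : Equiv.Perm (Fin r × ZMod 2)) ∈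
          Subgroup.closure (((M.map ι : Subgroup (Equiv.Perm (Fin r × ZMod 2))) : Set (Equiv.Perm (Fin r × ZMod 2))) ∪ ↑(Subgroup.zpowers (negSwap r))) := by
        intro c
        have hc2 : (c : Equiv.Perm (Fin r × ZMod 2)) ∈
            (M.map ι ⊔ Subgroup.zpowers (negSwap r)) := c.2
        rw [Subgroup.sup_eq_closure] at hc2
        exact hc2
      intro a b
      apply Subtype.ext
      push_cast
      exact hcl _ (hmem a) _ (hmem b)
    letI : CommGroup N := { (inferInstance : Group N) with mul_comm := hcommN }
    -- the fixed-point-free involution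
    have hνN : negSwap r ∈ N := Subgroup.mem_sup_right (Subgroup.mem_zpowers _)
    have hone : (1 : ZMod 2) + 1 = 0 := by decide
    have hν2 : (⟨negSwap r, hνN⟩ : N) ^ 2 = 1 := by
      apply Subtype.ext
      push_cast
      ext p
      · rfl
      · show (1 : ZMod 2) + (1 + p.2) = p.2
        rw [← add_assoc, hone, zero_add]
    have hνfpf : ∀ x : (Fin r × ZMod 2), (⟨negSwap r, hνN⟩ : N) • x ≠ x := by
      intro x hx
      have h3 : negSwap r x = x := hx
      rw [negSwap_apply] at h3
      have h4 := congrArg Prod.snd h3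
      exact one_ne_zero (add_eq_right.mp h4)
    have hbound := core_bound (G := N) (X := Fin r × ZMod 2) ⟨negSwap r, hνN⟩ hν2 hνfpf
    have hcardX : Fintype.card (Fin r × ZMod 2) / 2 = r := by
      simp [ZMod.card]
    rw [hcardX] at hbound
    have hMcard : Nat.card M = Nat.card (M.map ι) :=
      Nat.card_congr (Subgroup.equivMapOfInjective M ι
        (Subgroup.subtype_injective _)).toEquiv
    have hMN : Nat.card (M.map ι) ≤ Nat.card N :=
      Subgroup.card_le_of_le le_sup_left
    constructor
    · omega
    · intro hcard m
      have hNcard : Nat.card N = 2 ^ r := le_antisymm hbound (by omega)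
      have hexp := core_exponent (G := N) (X := Fin r × ZMod 2)
        ⟨negSwap r, hνN⟩ hν2 hνfpf (by rw [hNcard, hcardX])
      have hmm : (((m : hyperoctahedral r) : Equiv.Perm (Fin r × ZMod 2))) ∈ N :=
        Subgroup.mem_sup_left (Subgroup.mem_map_of_mem ι m.2)
      have h4 := hexp ⟨_, hmm⟩
      have h5 : (((m : hyperoctahedral r) : Equiv.Perm (Fin r × ZMod 2))) ^ 4 = 1 := by
        have := Subtype.ext_iff.mp h4
        push_cast at this
        exact this
      apply Subtype.ext
      apply Subtype.ext
      push_cast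
      exact h5
  constructor
  · constructor
    · exact ⟨(flipHom r).range, hwitcomm, hwitcard⟩
    · rintro m ⟨M, hM, rfl⟩
      exact (key M hM).1
  · intro M hM hcard
    exact classify hM hcard ((key M hM).2 hcard)
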